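/- Assume the heterogeneous quorum system 𝓠 has quorum sharing and global quorum intersection at 𝓦, and let p be a process that does not belong to any sink component of the quorum graph. Then every pair of quorums q, q' of 𝓠 satisfies q ∩ q' ∩ (𝓦 ∖ {p}) ≠ ∅. Consequently, a leave operation by p (removing p from the active processes without changing any other process's quorums) or a remove operation by p (deleting one quorum from 𝓠(p)) yields a quorum system whose quorums pairwise intersect at the remaining well-behaved processes 𝓦 ∖ {p}, i.e., preserves consistency. -/

import Mathlib

open Finset

/-- A heterogeneous quorum system on the (finite) set of processes `α`:
each process is assigned a nonempty antichain of nonempty finite sets of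
processes, its individual minimal quorums. -/
structure HQS (α : Type*) where
  /-- the individual minimal quorums of each process -/
  Q : α → Finset (Finset α)
  Q_nonempty : ∀ p, (Q p).Nonempty
  quorum_nonempty : ∀ p, ∀ q ∈ Q p, q.Nonempty
  antichain : ∀ p, ∀ q ∈ Q p, ∀ q' ∈ Q p, ¬ q ⊂ q'

variable {α : Type*}

/-- `q` is a quorum of the system: an individual minimal quorum of some process. -/
def HQS.IsQuorum (S : HQS α) (q : Finset α) : Prop := ∃ p, q ∈ S.Q p

/-- `q` is a minimal quorum of the system: a quorum no proper subset of which
is a quorum. -/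
def HQS.IsMinimalQuorum (S : HQS α) (q : Finset α) : Prop :=
  S.IsQuorum q ∧ ∀ q' ⊂ q, ¬ S.IsQuorum q'

/-- Edge of the quorum graph: `p` has `p'` in one of its individual minimal quorums. -/
def HQS.Edge (S : HQS α) (p p' : α) : Prop := ∃ q ∈ S.Q p, p' ∈ q

/-- Reachability by a directed path in the quorum graph. -/
def HQS.Reach (S : HQS α) : α → α → Prop := Relation.ReflTransGen S.Edge

/-- Two vertices are in the same strongly connected component. -/
def HQS.SameSCC (S : HQS α) (p p' : α) : Prop := S.Reach p p' ∧ S.Reach p' p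

/-- `C` is a strongly connected component of the quorum graph. -/
def HQS.IsSCC (S : HQS α) (C : Set α) : Prop := ∃ v, C = {u | S.SameSCC u v}

/-- `C` is a sink component: an SCC such that every edge leaving a vertex of `C`
ends in `C`. -/
def HQS.IsSinkComponent (S : HQS α) (C : Set α) : Prop :=
  S.IsSCC C ∧ ∀ p ∈ C, ∀ p', S.Edge p p' → p' ∈ C

/-- under quorum sharing and global quorum intersection at 𝓦, if
process p belongs to no sink component of the quorum graph, then every pair
of quorums of 𝓠 intersects at 𝓦 ∖ {p}; hence leave/remove operations by p
preserve consistency. -/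
theorem stmt_14 [Fintype α] [DecidableEq α] (S : HQS α) (𝓦 : Finset α)
    (hshare : ∀ p : α, ∀ q ∈ S.Q p, ∀ p' ∈ q, ∃ q' ∈ S.Q p', q' ⊆ q)
    (hinter : ∀ q q' : Finset α, S.IsQuorum q → S.IsQuorum q' →
        (q ∩ q' ∩ 𝓦).Nonempty)
    (p : α) (hp : ∀ C : Set α, S.IsSinkComponent C → p ∉ C) :
    ∀ q q' : Finset α, S.IsQuorum q → S.IsQuorum q' →
      (q ∩ q' ∩ (𝓦 \ {p})).Nonempty := by
  classical
  -- Key lemma: every quorum contains a quorum avoiding p.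
  have key : ∀ q : Finset α, S.IsQuorum q → ∃ r, S.IsQuorum r ∧ r ⊆ q ∧ p ∉ r := by
    intro q hq
    set T := q.powerset.filter (fun s => S.IsQuorum s) with hT
    have hqT : q ∈ T := by
      simp only [hT, mem_filter, mem_powerset]
      exact ⟨subset_rfl, hq⟩
    obtain ⟨r, hrT, hmin⟩ := T.exists_minimal ⟨q, hqT⟩
    have hr : S.IsQuorum r := (mem_filter.1 hrT).2
    have hrq : r ⊆ q := mem_powerset.1 (mem_filter.1 hrT).1
    -- r is an individual minimal quorum of each of its members
    have hall : ∀ u ∈ r, r ∈ S.Q u := by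
      intro u hu
      obtain ⟨p0, hp0⟩ := hr
      obtain ⟨q1, hq1, hsub⟩ := hshare p0 r hp0 u hu
      have hq1T : q1 ∈ T := by
        simp only [hT, mem_filter, mem_powerset]
        exact ⟨hsub.trans hrq, ⟨u, hq1⟩⟩
      have : q1 = r := by
        rcases lt_or_eq_of_le (le_iff_subset.2 hsub) with h | h
        · exact absurd h (not_lt_of_ge (le_iff_subset.2 (hmin hq1T hsub)))
        · exact h
      exact this ▸ hq1
    refine ⟨r, hr, hrq, ?_⟩
    by_contra hpr
    -- Then the SCC of p is a sink component, contradiction.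
    refine hp {u | S.SameSCC u p} ⟨⟨p, rfl⟩, ?_⟩
      ⟨Relation.ReflTransGen.refl, Relation.ReflTransGen.refl⟩
    intro w hw x hedge
    obtain ⟨qw, hqw, hxqw⟩ := hedge
    obtain ⟨qx, hqx, hqxsub⟩ := hshare w qw hqw x hxqw
    obtain ⟨y, hy⟩ := hinter qx r ⟨x, hqx⟩ hr
    simp only [mem_inter] at hy
    have hxy : S.Edge x y := ⟨qx, hqx, hy.1.1⟩
    have hyp : S.Edge y p := ⟨r, hall y hy.1.2, hpr⟩
    have hxp : S.Reach x p :=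
      Relation.ReflTransGen.head hxy (Relation.ReflTransGen.single hyp)
    have hpw : S.Reach p w := hw.2
    have hpx : S.Reach p x := hpw.tail ⟨qw, hqw, hxqw⟩
    exact ⟨hxp, hpx⟩
  intro q q' hq hq'
  obtain ⟨r, hr, hrq, hpr⟩ := key q hq
  obtain ⟨r', hr', hrq', hpr'⟩ := key q' hq'
  obtain ⟨z, hz⟩ := hinter r r' hr hr'
  simp only [mem_inter] at hz
  refine ⟨z, ?_⟩
  simp only [mem_inter, mem_sdiff, mem_singleton]
  exact ⟨⟨hrq hz.1.1, hrq' hz.1.2⟩, hz.2, fun h => hpr (h ▸ hz.1.1)⟩
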